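/- Let R be a reduced Noetherian commutative ring of prime characteristic p, and let T be a strong test ideal of R (T ∩ R^o ≠ ∅ and T·(I*) = T·I for every ideal I) generated by n elements. Then R is n-tight: for every ideal I and every x ∈ I*, there exist a_1, …, a_n with a_i ∈ I^i and x^n + a_1·x^{n−1} + ⋯ + a_n = 0. -/

import Mathlib

/-- The `q`-th Frobenius power `I^{[q]}` of an ideal `I`: the ideal generated by
the `q`-th powers of the elements of `I`. -/
def frobeniusPower {R : Type*} [CommRing R] (I : Ideal R) (q : ℕ) : Ideal R :=
  Ideal.span ((fun a => a ^ q) '' (I : Set R))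

/-- `Rreg c` means `c ∈ R^o`, i.e. `c` avoids every minimal prime of `R`. -/
def Rreg {R : Type*} [CommRing R] (c : R) : Prop :=
  ∀ P ∈ minimalPrimes R, c ∉ P

/-- `x` lies in the tight closure `I*` of `I` (characteristic `p`):
there is `c ∈ R^o` with `c * x^(p^e) ∈ I^{[p^e]}` for all `e ≫ 0`. -/
def InTightClosure {R : Type*} [CommRing R] (p : ℕ) (I : Ideal R) (x : R) : Prop :=
  ∃ c, Rreg c ∧ ∃ N : ℕ, ∀ e ≥ N, c * x ^ p ^ e ∈ frobeniusPower I (p ^ e)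

/-- The tight closure `I*` of `I`, as an ideal: the span of the set of elements in the
tight closure (this set is already an ideal, so taking the span is harmless). -/
def tightClosure {R : Type*} [CommRing R] (p : ℕ) (I : Ideal R) : Ideal R :=
  Ideal.span {x | InTightClosure p I x}

/-- **Huneke.** If `R` has a strong test ideal generated by `n` elements,
then `R` is `n`-tight: every `x ∈ I*` satisfies a degree-`n` equation of integral
dependence over `I`. -/
theorem n_tight_of_strong_test_ideal {R : Type*} [CommRing R] [IsNoetherianRing R]
    [IsReduced R] (p : ℕ) [Fact p.Prime] [CharP R p]
    (T : Ideal R) (n : ℕ)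
    (hgen : ∃ f : Fin n → R, T = Ideal.span (Set.range f))
    (hTreg : ∃ c ∈ T, Rreg c)
    (hstrong : ∀ I : Ideal R, T * tightClosure p I = T * I) :
    ∀ I : Ideal R, ∀ x : R, InTightClosure p I x →
      ∃ a : ℕ → R, (∀ i, 1 ≤ i → i ≤ n → a i ∈ I ^ i) ∧
        x ^ n + ∑ i ∈ Finset.Icc 1 n, a i * x ^ (n - i) = 0 := by
  classical
  intro I x hx
  rcases subsingleton_or_nontrivial R with hR | hR
  · exact ⟨0, fun i _ _ => by simp, Subsingleton.elim _ _⟩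
  obtain ⟨f, hf⟩ := hgen
  obtain ⟨c, hcT, hcreg⟩ := hTreg
  -- `x` belongs to the tight closure ideal
  have hxTC : x ∈ tightClosure p I := Ideal.subset_span hx
  -- each `f i * x` lies in `I • T`
  have key : ∀ i, f i * x ∈ I • (Submodule.span R (Set.range f)) := by
    intro i
    have h1 : f i ∈ T := hf ▸ Ideal.subset_span (Set.mem_range_self i)
    have h2 : f i * x ∈ T * I := (hstrong I) ▸ Ideal.mul_mem_mul h1 hxTC
    rw [mul_comm] at h2
    rw [Ideal.smul_eq_mul]
    show f i * x ∈ I * Ideal.span (Set.range f)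
    rw [← hf]
    exact h2
  have key2 : ∀ i, ∃ (a : Fin n →₀ R), (∀ j, a j ∈ I) ∧
      (a.sum fun j r => r * f j) = f i * x := by
    intro i
    obtain ⟨a, ha, hsum⟩ := (Submodule.mem_ideal_smul_span_iff_exists_sum I f _).mp (key i)
    exact ⟨a, ha, by simpa [smul_eq_mul] using hsum⟩
  choose aRow haI hasum using key2
  -- the matrix of coefficients
  set B : Matrix (Fin n) (Fin n) R := fun i j => aRow i j with hB
  have hBI : ∀ i j, B i j ∈ I := fun i j => haI i j
  have hrow : ∀ i, ∑ j, B i j * f j = f i * x := by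
    intro i
    rw [← hasum i]
    exact (Finsupp.sum_fintype (aRow i) (fun j r => r * f j)
      (fun j => zero_mul (f j))).symm
  -- the matrix `x·1 - B` kills the vector `f`
  set A : Matrix (Fin n) (Fin n) R := Matrix.scalar (Fin n) x - B with hA
  have hAf : A.mulVec f = 0 := by
    funext i
    have : A.mulVec f i = ∑ j, (Matrix.scalar (Fin n) x - B) i j * f j := rfl
    rw [Pi.zero_apply, this]
    simp only [Matrix.sub_apply, Matrix.scalar_apply, Matrix.diagonal_apply, sub_mul,
      Finset.sum_sub_distrib, ite_mul, zero_mul, Finset.sum_ite_eq, Finset.mem_univ, if_true]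
    rw [hrow i]
    ring
  -- hence `det A` kills each `f j`
  have hdetf : ∀ j, A.det * f j = 0 := by
    have hsmul : A.det • f = 0 := by
      calc A.det • f = (A.det • (1 : Matrix (Fin n) (Fin n) R)).mulVec f := by
            rw [Matrix.smul_mulVec, Matrix.one_mulVec]
        _ = (A.adjugate * A).mulVec f := by rw [Matrix.adjugate_mul]
        _ = A.adjugate.mulVec (A.mulVec f) := by rw [← Matrix.mulVec_mulVec]
        _ = 0 := by rw [hAf, Matrix.mulVec_zero]
    intro j
    have := congrFun hsmul j
    simpa [smul_eq_mul] using this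
  -- hence `det A` kills `c`
  have hdc : A.det * c = 0 := by
    have hcT' : c ∈ Submodule.span R (Set.range f) := by rwa [hf] at hcT
    refine Submodule.span_induction ?_ ?_ ?_ ?_ hcT'
    · rintro y ⟨j, rfl⟩; exact hdetf j
    · simp
    · intro y z _ _ hy hz; rw [mul_add, hy, hz, add_zero]
    · intro r y _ hy; rw [smul_eq_mul, mul_comm r y, ← mul_assoc, hy, zero_mul]
  -- `c` avoids every minimal prime, so `det A` lies in all of them, hence is `0`
  have hdet0 : A.det = 0 := by
    have hmem : A.det ∈ sInf (minimalPrimes R) := by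
      refine Submodule.mem_sInf.mpr ?_
      intro P hP
      have hprime : Ideal.IsPrime P := hP.1.1
      have h0 : A.det * c ∈ P := hdc ▸ P.zero_mem
      rcases hprime.mem_or_mem h0 with h | h
      · exact h
      · exact absurd h (hcreg P hP)
    have : sInf (minimalPrimes R) = (⊥ : Ideal R) := by
      rw [minimalPrimes, Ideal.sInf_minimalPrimes]
      simpa [nilradical] using nilradical_eq_zero R
    rw [this] at hmem
    simpa using hmem
  -- relate `det A` to the characteristic polynomial of `B`
  have hdeg : B.charpoly.natDegree = n := by
    rw [Matrix.charpoly_natDegree_eq_dim, Fintype.card_fin]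
  have hcoef : ∀ k, B.charpoly.coeff k ∈ I ^ (n - k) := by
    intro k
    simpa [Fintype.card_fin] using Matrix.coeff_charpoly_mem_ideal_pow hBI k
  have heval : B.charpoly.eval x = A.det := by
    rw [Matrix.charpoly, eval_det, Matrix.matPolyEquiv_charmatrix]
    congr 1
    simp [hA, Polynomial.eval_sub, Polynomial.eval_C, Polynomial.eval_X, Matrix.scalar]
  -- expand the evaluation
  refine ⟨fun i => B.charpoly.coeff (n - i), ?_, ?_⟩
  · intro i h1 h2
    have := hcoef (n - i)
    rwa [Nat.sub_sub_self h2] at this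
  · have hexp : B.charpoly.eval x
        = x ^ n + ∑ i ∈ Finset.Icc 1 n, B.charpoly.coeff (n - i) * x ^ (n - i) := by
      rw [Polynomial.eval_eq_sum_range, hdeg, Finset.sum_range_succ]
      have hlead : B.charpoly.coeff n = 1 := by
        have := (Matrix.charpoly_monic B).coeff_natDegree
        rwa [hdeg] at this
      rw [hlead, one_mul, add_comm]
      congr 1
      refine (Finset.sum_nbij' (fun k => n - k) (fun i => n - i) ?_ ?_ ?_ ?_ ?_).symm
      · intro a ha; simp only [Finset.mem_Icc, Finset.mem_range] at ha ⊢; omega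
      · intro a ha; simp only [Finset.mem_Icc, Finset.mem_range] at ha ⊢; omega
      · intro a ha; simp only [Finset.mem_Icc, Finset.mem_range] at ha ⊢; omega
      · intro a ha; simp only [Finset.mem_Icc, Finset.mem_range] at ha ⊢; omega
      · intro a ha; rfl
    rw [← hexp, heval, hdet0]
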